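/- For every positive integer r and every z ∈ ℂ one has ∑_{m=1}^{r} (2·(−1)^r · m^{2r} / ((r−m)! · (r+m)!)) · ( T_{2m}(iz/(2m)) + i · U_{2m−1}(iz/(2m)) ) = ∑_{m=0}^{2r} z^m/m!, where T_ℓ and U_ℓ denote the Chebyshev polynomials of the first and second kind respectively and i is the imaginary unit. -/

import Mathlib

open Finset Polynomial Complex

noncomputable def aQ (m t : ℕ) : ℚ :=
  if t ≤ m then (m : ℚ) * (Nat.factorial (m + t - 1) : ℚ) /
    ((Nat.factorial (m - t) : ℚ) * (Nat.factorial (2*t) : ℚ)) else 0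

noncomputable def bQ (m t : ℕ) : ℚ :=
  if t < m then (Nat.factorial (m + t) : ℚ) /
    ((Nat.factorial (m - t - 1) : ℚ) * (Nat.factorial (2*t+1) : ℚ)) else 0

lemma factQ_ne (n : ℕ) : ((Nat.factorial n : ℕ) : ℚ) ≠ 0 :=
  Nat.cast_ne_zero.2 (Nat.factorial_ne_zero n)

lemma factQ_pos (n : ℕ) : 0 < ((Nat.factorial n : ℕ) : ℚ) := by
  exact_mod_cast Nat.factorial_pos n

lemma fact_shift (n k : ℕ) : (Nat.factorial (n+k) : ℚ) =
    (Nat.factorial n : ℚ) * ∏ i ∈ range k, ((n:ℚ) + i + 1) := by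
  induction k with
  | zero => simp
  | succ k ih =>
      rw [show n+(k+1) = (n+k)+1 from rfl, Nat.factorial_succ, prod_range_succ]
      push_cast
      rw [ih]; ring

lemma aQ_eq_zero {m t : ℕ} (h : m < t) : aQ m t = 0 := by simp [aQ, Nat.not_le.2 h]
lemma bQ_eq_zero {m t : ℕ} (h : m ≤ t) : bQ m t = 0 := by simp [bQ, Nat.not_lt.2 h]

lemma aQ_zero {m : ℕ} (hm : 1 ≤ m) : aQ m 0 = 1 := by
  simp only [aQ, Nat.zero_le, if_true, Nat.add_zero, Nat.sub_zero, Nat.mul_zero,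
    Nat.factorial_zero]
  rw [show ((m:ℚ) * (Nat.factorial (m-1) : ℚ)) = ((Nat.factorial m : ℕ) : ℚ) by
    rw [← Nat.mul_factorial_pred (by omega : m ≠ 0)]; push_cast; ring]
  rw [Nat.cast_one, mul_one, div_self (factQ_ne m)]

lemma P1b {m : ℕ} (hm : 1 ≤ m) : aQ (m+1) 1 = aQ m 1 + aQ m 0 / 2 + bQ m 0 := by
  obtain ⟨w, rfl⟩ : ∃ w, m = w + 1 := ⟨m-1, by omega⟩
  rw [aQ_zero (by omega)]
  simp only [aQ, bQ]
  rw [if_pos (by omega), if_pos (by omega), if_pos (by omega)]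
  rw [show w+1+1+1-1 = w+2 from rfl, show w+1+1-1 = w+1 from rfl,
      show w+1-1 = w from rfl, show w+1-0-1 = w from rfl, show w+1+0 = w+1 from rfl]
  rw [show w+2 = w+2 from rfl]
  rw [show (Nat.factorial (w+2) : ℚ) = _ from fact_shift w 2,
      show (Nat.factorial (w+1) : ℚ) = _ from fact_shift w 1]
  simp only [prod_range_succ, prod_range_zero]
  have h1 : ((w:ℚ)+1) ≠ 0 := by positivity
  have h2 : ((w:ℚ)+0+1) ≠ 0 := by positivity
  have h3 : ((w:ℚ)+1+1) ≠ 0 := by positivity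
  field_simp
  push_cast; ring

lemma P1a {m : ℕ} (hm : 1 ≤ m) : aQ (m+1) 0 = aQ m 0 := by
  rw [aQ_zero (by omega), aQ_zero hm]

lemma P2a {m : ℕ} (hm : 1 ≤ m) : bQ (m+1) 0 = aQ m 0 + bQ m 0 := by
  obtain ⟨w, rfl⟩ : ∃ w, m = w + 1 := ⟨m-1, by omega⟩
  rw [aQ_zero (by omega)]
  simp only [bQ]
  rw [if_pos (by omega), if_pos (by omega)]
  rw [show w+1+1-0-1 = w+1 from rfl, show w+1-0-1 = w from rfl,
      show w+1+1+0 = w+2 from rfl, show w+1+0 = w+1 from rfl, show 2*0+1 = 1 from rfl]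
  rw [show (Nat.factorial (w+2) : ℚ) = _ from fact_shift w 2,
      show (Nat.factorial (w+1) : ℚ) = _ from fact_shift w 1]
  simp only [prod_range_succ, prod_range_zero, Nat.factorial_one]
  have h1 : ((w:ℚ)+0+1) ≠ 0 := by positivity
  have h2 : ((w:ℚ)+0+1+1) ≠ 0 := by positivity
  field_simp
  ring


lemma P1c (m s : ℕ) (hm : 1 ≤ m) :
    aQ (m+1) (s+2) = aQ m (s+2) + aQ m (s+1)/2 + bQ m (s+1) + bQ m s/4 := by
  rcases Nat.lt_or_ge m (s+2) with h | h
  · rcases Nat.lt_or_ge m (s+1) with h2 | h2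
    · rw [aQ_eq_zero (m := m+1) (by omega), aQ_eq_zero (m := m) (t := s+2) (by omega),
          aQ_eq_zero (m := m) (t := s+1) (by omega),
          bQ_eq_zero (m := m) (t := s+1) (by omega),
          bQ_eq_zero (m := m) (t := s) (by omega)]
      norm_num
    · obtain rfl : m = s + 1 := by omega
      rw [aQ_eq_zero (m := s+1) (t := s+2) (by omega),
          bQ_eq_zero (m := s+1) (t := s+1) (by omega)]
      simp only [aQ, bQ]
      rw [if_pos (by omega : s+2 ≤ s+1+1), if_pos (by omega : s+1 ≤ s+1),
          if_pos (by omega : s < s+1)]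
      rw [show s+1+1+(s+2)-1 = (2*s+1)+2 from by omega,
          show s+1+1-(s+2) = 0 from by omega,
          show s+1+(s+1)-1 = (2*s+1) from by omega,
          show s+1-s-1 = 0 from by omega,
          show s+1-(s+1) = 0 from by omega,
          show s+1+s = (2*s+1) from by omega,
          show 2*(s+2) = (2*s+1)+3 from by omega,
          show 2*(s+1) = (2*s+1)+1 from by omega]
      rw [show (Nat.factorial (2*s+1+3) : ℚ) = _ from fact_shift (2*s+1) 3,
          show (Nat.factorial (2*s+1+2) : ℚ) = _ from fact_shift (2*s+1) 2,
          show (Nat.factorial (2*s+1+1) : ℚ) = _ from fact_shift (2*s+1) 1]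
      simp only [prod_range_succ, prod_range_zero, Nat.factorial_zero]
      have h1 : ((2*s+1:ℕ):ℚ)+0+1 ≠ 0 := by positivity
      have h2 : ((2*s+1:ℕ):ℚ)+0+1+1 ≠ 0 := by positivity
      have h3 : ((2*s+1:ℕ):ℚ)+0+1+1+1 ≠ 0 := by positivity
      have h4 := factQ_ne (2*s+1)
      field_simp
      push_cast
      ring
  · obtain ⟨u, rfl⟩ : ∃ u, m = s+2+u := ⟨m-(s+2), by omega⟩
    simp only [aQ, bQ]
    rw [if_pos (by omega : s+2 ≤ s+2+u+1), if_pos (by omega : s+2 ≤ s+2+u),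
        if_pos (by omega : s+1 ≤ s+2+u), if_pos (by omega : s+1 < s+2+u),
        if_pos (by omega : s < s+2+u)]
    rw [show s+2+u+1+(s+2)-1 = (2*s+u+2)+2 from by omega,
        show s+2+u+1-(s+2) = u+1 from by omega,
        show s+2+u+(s+2)-1 = (2*s+u+2)+1 from by omega,
        show s+2+u-(s+2) = u from by omega,
        show s+2+u-(s+1)-1 = u from by omega,
        show s+2+u+(s+1)-1 = (2*s+u+2) from by omega,
        show s+2+u-(s+1) = u+1 from by omega,
        show s+2+u+(s+1) = (2*s+u+2)+1 from by omega,
        show s+2+u-s-1 = u+1 from by omega,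
        show s+2+u+s = (2*s+u+2) from by omega,
        show 2*(s+2) = (2*s+1)+3 from by omega,
        show 2*(s+1)+1 = (2*s+1)+2 from by omega,
        show 2*(s+1) = (2*s+1)+1 from by omega]
    rw [show (Nat.factorial (2*s+u+2+2) : ℚ) = _ from fact_shift (2*s+u+2) 2,
        show (Nat.factorial (2*s+u+2+1) : ℚ) = _ from fact_shift (2*s+u+2) 1,
        show (Nat.factorial (2*s+1+3) : ℚ) = _ from fact_shift (2*s+1) 3,
        show (Nat.factorial (2*s+1+2) : ℚ) = _ from fact_shift (2*s+1) 2,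
        show (Nat.factorial (2*s+1+1) : ℚ) = _ from fact_shift (2*s+1) 1,
        show (Nat.factorial (u+1) : ℚ) = _ from fact_shift u 1]
    simp only [prod_range_succ, prod_range_zero, Nat.factorial_zero]
    have h1 : ((2*s+u+2:ℕ):ℚ)+0+1 ≠ 0 := by positivity
    have h2 : ((2*s+u+2:ℕ):ℚ)+0+1+1 ≠ 0 := by positivity
    have h3 : ((2*s+1:ℕ):ℚ)+0+1 ≠ 0 := by positivity
    have h4 : ((2*s+1:ℕ):ℚ)+0+1+1 ≠ 0 := by positivity
    have h5 : ((2*s+1:ℕ):ℚ)+0+1+1+1 ≠ 0 := by positivity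
    have h6 : ((u:ℕ):ℚ)+0+1 ≠ 0 := by positivity
    have h7 := factQ_ne u
    have h8 := factQ_ne (2*s+1)
    have h9 := factQ_ne (2*s+u+2)
    field_simp
    push_cast
    ring

lemma P2b (m s : ℕ) (hm : 1 ≤ m) :
    bQ (m+1) (s+1) = aQ m (s+1) + bQ m (s+1) + bQ m s/2 := by
  rcases Nat.lt_or_ge m (s+2) with h | h
  · rcases Nat.lt_or_ge m (s+1) with h2 | h2
    · rw [bQ_eq_zero (m := m+1) (t := s+1) (by omega),
          aQ_eq_zero (m := m) (t := s+1) (by omega),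
          bQ_eq_zero (m := m) (t := s+1) (by omega),
          bQ_eq_zero (m := m) (t := s) (by omega)]
      norm_num
    · obtain rfl : m = s + 1 := by omega
      rw [bQ_eq_zero (m := s+1) (t := s+1) (by omega)]
      simp only [aQ, bQ]
      rw [if_pos (by omega : s+1 < s+1+1), if_pos (by omega : s+1 ≤ s+1),
          if_pos (by omega : s < s+1)]
      rw [show s+1+1+(s+1) = (2*s+1)+2 from by omega,
          show s+1+1-(s+1)-1 = 0 from by omega,
          show s+1+(s+1)-1 = (2*s+1) from by omega,
          show s+1-s-1 = 0 from by omega,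
          show s+1-(s+1) = 0 from by omega,
          show s+1+s = (2*s+1) from by omega,
          show 2*(s+1)+1 = (2*s+1)+2 from by omega,
          show 2*(s+1) = (2*s+1)+1 from by omega]
      rw [show (Nat.factorial (2*s+1+2) : ℚ) = _ from fact_shift (2*s+1) 2,
          show (Nat.factorial (2*s+1+1) : ℚ) = _ from fact_shift (2*s+1) 1]
      simp only [prod_range_succ, prod_range_zero, Nat.factorial_zero]
      have h1 : ((2*s+1:ℕ):ℚ)+0+1 ≠ 0 := by positivity
      have h2 : ((2*s+1:ℕ):ℚ)+0+1+1 ≠ 0 := by positivity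
      have h4 := factQ_ne (2*s+1)
      field_simp
      push_cast
      ring
  · obtain ⟨u, rfl⟩ : ∃ u, m = s+2+u := ⟨m-(s+2), by omega⟩
    simp only [aQ, bQ]
    rw [if_pos (by omega : s+1 < s+2+u+1), if_pos (by omega : s+1 ≤ s+2+u),
        if_pos (by omega : s+1 < s+2+u), if_pos (by omega : s < s+2+u)]
    rw [show s+2+u+1-(s+1)-1 = u+1 from by omega,
        show s+2+u+1+(s+1) = (2*s+u+2)+2 from by omega,
        show s+2+u-(s+1)-1 = u from by omega,
        show s+2+u+(s+1)-1 = (2*s+u+2) from by omega,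
        show s+2+u-(s+1) = u+1 from by omega,
        show s+2+u+(s+1) = (2*s+u+2)+1 from by omega,
        show s+2+u-s-1 = u+1 from by omega,
        show s+2+u+s = (2*s+u+2) from by omega,
        show 2*(s+1)+1 = (2*s+1)+2 from by omega,
        show 2*(s+1) = (2*s+1)+1 from by omega]
    rw [show (Nat.factorial (2*s+u+2+2) : ℚ) = _ from fact_shift (2*s+u+2) 2,
        show (Nat.factorial (2*s+u+2+1) : ℚ) = _ from fact_shift (2*s+u+2) 1,
        show (Nat.factorial (2*s+1+2) : ℚ) = _ from fact_shift (2*s+1) 2,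
        show (Nat.factorial (2*s+1+1) : ℚ) = _ from fact_shift (2*s+1) 1,
        show (Nat.factorial (u+1) : ℚ) = _ from fact_shift u 1]
    simp only [prod_range_succ, prod_range_zero, Nat.factorial_zero]
    have h1 : ((2*s+u+2:ℕ):ℚ)+0+1 ≠ 0 := by positivity
    have h2 : ((2*s+u+2:ℕ):ℚ)+0+1+1 ≠ 0 := by positivity
    have h3 : ((2*s+1:ℕ):ℚ)+0+1 ≠ 0 := by positivity
    have h4 : ((2*s+1:ℕ):ℚ)+0+1+1 ≠ 0 := by positivity
    have h6 : ((u:ℕ):ℚ)+0+1 ≠ 0 := by positivity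
    have h7 := factQ_ne u
    have h8 := factQ_ne (2*s+1)
    have h9 := factQ_ne (2*s+u+2)
    field_simp
    push_cast
    ring

noncomputable def aC (m t : ℕ) : ℂ := ((aQ m t : ℚ) : ℂ)
noncomputable def bC (m t : ℕ) : ℂ := ((bQ m t : ℚ) : ℂ)

lemma aC_eq_zero {m t : ℕ} (h : m < t) : aC m t = 0 := by
  simp [aC, aQ_eq_zero h]
lemma bC_eq_zero {m t : ℕ} (h : m ≤ t) : bC m t = 0 := by
  simp [bC, bQ_eq_zero h]
lemma aC_zero {m : ℕ} (hm : 1 ≤ m) : aC m 0 = 1 := by simp [aC, aQ_zero hm]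

lemma P1aC {m : ℕ} (hm : 1 ≤ m) : aC (m+1) 0 = aC m 0 := by
  simp only [aC]; exact_mod_cast P1a hm
lemma P1bC {m : ℕ} (hm : 1 ≤ m) : aC (m+1) 1 = aC m 1 + aC m 0 / 2 + bC m 0 := by
  simp only [aC, bC]; exact_mod_cast P1b hm
lemma P2aC {m : ℕ} (hm : 1 ≤ m) : bC (m+1) 0 = aC m 0 + bC m 0 := by
  simp only [aC, bC]; exact_mod_cast P2a hm
lemma P1cC (m s : ℕ) (hm : 1 ≤ m) :
    aC (m+1) (s+2) = aC m (s+2) + aC m (s+1)/2 + bC m (s+1) + bC m s/4 := by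
  simp only [aC, bC]; exact_mod_cast P1c m s hm
lemma P2bC (m s : ℕ) (hm : 1 ≤ m) :
    bC (m+1) (s+1) = aC m (s+1) + bC m (s+1) + bC m s/2 := by
  simp only [aC, bC]; exact_mod_cast P2b m s hm
open Polynomial.Chebyshev in
lemma Tstep (n : ℤ) : T ℂ (n+2) = (2*X^2-1) * T ℂ n - (2*X*(1-X^2)) * U ℂ (n-1) := by
  have h1 := T_eq_X_mul_T_sub_pol_U ℂ n
  have h2 := T_eq_X_mul_T_sub_pol_U ℂ (n-1)
  rw [show n-1+2 = n+1 from by ring, show n-1+1 = n from by ring] at h2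
  have h3 := U_eq_X_mul_U_add_T ℂ (n-1)
  rw [show n-1+1 = n from by ring] at h3
  linear_combination h1 + (X:ℂ[X]) * h2 - (1-X^2) * h3

open Polynomial.Chebyshev in
lemma Ustep (n : ℤ) : U ℂ (n+1) = 2*X*T ℂ n + (2*X^2-1) * U ℂ (n-1) := by
  have h4 := U_eq_X_mul_U_add_T ℂ n
  have h3 := U_eq_X_mul_U_add_T ℂ (n-1)
  rw [show n-1+1 = n from by ring] at h3
  have h2 := T_eq_X_mul_T_sub_pol_U ℂ (n-1)
  rw [show n-1+2 = n+1 from by ring, show n-1+1 = n from by ring] at h2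
  linear_combination h4 + (X:ℂ[X]) * h3 + h2

-- evaluated versions
lemma Tstep_eval (m : ℕ) (x : ℂ) (SA SB : ℂ)
    (hT : (Polynomial.Chebyshev.T ℂ (2*(m:ℤ))).eval (I*x) = (-1)^m * SA)
    (hU : (Polynomial.Chebyshev.U ℂ (2*(m:ℤ)-1)).eval (I*x) * I = (-1)^m * SB) :
    (Polynomial.Chebyshev.T ℂ (2*((m+1:ℕ):ℤ))).eval (I*x)
      = (-1)^(m+1) * ((1+(2*x)^2/2) * SA + ((2*x)+(2*x)^3/4) * SB) := by
  have hU2 : (Polynomial.Chebyshev.U ℂ (2*(m:ℤ)-1)).eval (I*x)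
      = ((-1)^m * SB) * (-I) := by
    rw [← hU]; ring_nf; rw [Complex.I_sq]; ring
  rw [show (2*((m+1:ℕ):ℤ)) = 2*(m:ℤ)+2 from by push_cast; ring, Tstep]
  simp only [eval_sub, eval_mul, eval_add, eval_pow, eval_one, eval_X, eval_ofNat]
  rw [hT, hU2]
  ring_nf
  rw [Complex.I_sq]
  ring_nf
  simp only [Complex.I_sq, Complex.I_pow_four]
  ring

lemma Ustep_eval (m : ℕ) (x : ℂ) (SA SB : ℂ)
    (hT : (Polynomial.Chebyshev.T ℂ (2*(m:ℤ))).eval (I*x) = (-1)^m * SA)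
    (hU : (Polynomial.Chebyshev.U ℂ (2*(m:ℤ)-1)).eval (I*x) * I = (-1)^m * SB) :
    (Polynomial.Chebyshev.U ℂ (2*((m+1:ℕ):ℤ)-1)).eval (I*x) * I
      = (-1)^(m+1) * ((2*x) * SA + (1+(2*x)^2/2) * SB) := by
  have hU2 : (Polynomial.Chebyshev.U ℂ (2*(m:ℤ)-1)).eval (I*x)
      = ((-1)^m * SB) * (-I) := by
    rw [← hU]; ring_nf; rw [Complex.I_sq]; ring
  rw [show (2*((m+1:ℕ):ℤ)-1) = 2*(m:ℤ)+1 from by push_cast; ring, Ustep]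
  simp only [eval_sub, eval_mul, eval_add, eval_pow, eval_one, eval_X, eval_ofNat]
  rw [hT, hU2]
  ring_nf
  rw [Complex.I_sq]
  ring_nf
  simp only [Complex.I_sq, Complex.I_pow_four]
  ring

lemma helper1 (c : ℕ → ℂ) (M k : ℕ) (y : ℂ) :
    ∑ t ∈ range (M+2), c t * y^(2*t+k)
      = c 0 * y^k + c 1 * y^(2+k) + ∑ s ∈ range M, c (s+2) * y^(2*s+(4+k)) := by
  rw [Finset.sum_range_succ', Finset.sum_range_succ']
  simp only [show ∀ i:ℕ, 2*(i+1+1)+k = 2*i+(4+k) from fun i => by ring,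
             show 2*(0+1)+k = 2+k from by ring, show 2*0+k = k from by ring]
  ring

lemma helper2 (c : ℕ → ℂ) (M k : ℕ) (y : ℂ) :
    ∑ t ∈ range (M+2), c t * y^(2*t+k)
      = c 0 * y^k + (∑ s ∈ range M, c (s+1) * y^(2*s+(2+k))) + c (M+1) * y^(2*(M+1)+k) := by
  rw [Finset.sum_range_succ, Finset.sum_range_succ']
  simp only [show ∀ i:ℕ, 2*(i+1)+k = 2*i+(2+k) from fun i => by ring,
             show 2*0+k = k from by ring]
  ring

lemma helper3 (c : ℕ → ℂ) (M k : ℕ) (y : ℂ) :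
    ∑ t ∈ range (M+2), c t * y^(2*t+k)
      = (∑ s ∈ range M, c s * y^(2*s+k)) + c M * y^(2*M+k) + c (M+1) * y^(2*(M+1)+k) := by
  rw [Finset.sum_range_succ, Finset.sum_range_succ]

lemma R1 (m M : ℕ) (hm : 1 ≤ m) (hM : m ≤ M) (y : ℂ) :
    ∑ t ∈ range (M+2), aC (m+1) t * y^(2*t)
      = (1 + y^2/2) * (∑ t ∈ range (M+2), aC m t * y^(2*t))
        + (y + y^3/4) * (∑ t ∈ range (M+2), bC m t * y^(2*t+1)) := by
  have e0 : ∀ (c : ℕ → ℂ), ∑ t ∈ range (M+2), c t * y^(2*t)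
      = ∑ t ∈ range (M+2), c t * y^(2*t+0) := by
    intro c; apply Finset.sum_congr rfl; intro t _; norm_num
  have eA : (1 + y^2/2) * (∑ t ∈ range (M+2), aC m t * y^(2*t))
      = (∑ t ∈ range (M+2), aC m t * y^(2*t+0))
        + (1/2) * ∑ t ∈ range (M+2), aC m t * y^(2*t+2) := by
    rw [Finset.mul_sum, Finset.mul_sum, ← Finset.sum_add_distrib]
    apply Finset.sum_congr rfl; intro t _; ring
  have eB : (y + y^3/4) * (∑ t ∈ range (M+2), bC m t * y^(2*t+1))
      = (∑ t ∈ range (M+2), bC m t * y^(2*t+2))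
        + (1/4) * ∑ t ∈ range (M+2), bC m t * y^(2*t+4) := by
    rw [Finset.mul_sum, Finset.mul_sum, ← Finset.sum_add_distrib]
    apply Finset.sum_congr rfl; intro t _; ring
  rw [e0, eA, eB, helper1 (aC (m+1)) M 0 y, helper1 (aC m) M 0 y,
      helper2 (aC m) M 2 y, helper2 (bC m) M 2 y, helper3 (bC m) M 4 y,
      aC_eq_zero (show m < M+1 by omega), bC_eq_zero (show m ≤ M+1 by omega),
      bC_eq_zero (show m ≤ M from hM), P1aC hm, P1bC hm]
  rw [show ∑ s ∈ range M, aC (m+1) (s+2) * y^(2*s+(4+0))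
      = ((∑ s ∈ range M, aC m (s+2) * y^(2*s+(4+0)))
        + (1/2) * ∑ s ∈ range M, aC m (s+1) * y^(2*s+(2+2)))
        + ((∑ s ∈ range M, bC m (s+1) * y^(2*s+(2+2)))
        + (1/4) * ∑ s ∈ range M, bC m s * y^(2*s+4)) from by
    rw [Finset.mul_sum, Finset.mul_sum, ← Finset.sum_add_distrib,
        ← Finset.sum_add_distrib, ← Finset.sum_add_distrib]
    apply Finset.sum_congr rfl; intro s _
    rw [P1cC m s hm]
    norm_num; ring]
  norm_num; ring

lemma R2 (m M : ℕ) (hm : 1 ≤ m) (hM : m ≤ M) (y : ℂ) :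
    ∑ t ∈ range (M+2), bC (m+1) t * y^(2*t+1)
      = y * (∑ t ∈ range (M+2), aC m t * y^(2*t))
        + (1 + y^2/2) * (∑ t ∈ range (M+2), bC m t * y^(2*t+1)) := by
  have e0 : ∀ (c : ℕ → ℂ), ∑ t ∈ range (M+2), c t * y^(2*t)
      = ∑ t ∈ range (M+2), c t * y^(2*t+0) := by
    intro c; apply Finset.sum_congr rfl; intro t _; norm_num
  have eA : y * (∑ t ∈ range (M+2), aC m t * y^(2*t))
      = ∑ t ∈ range (M+2), aC m t * y^(2*t+1) := by
    rw [Finset.mul_sum]; apply Finset.sum_congr rfl; intro t _; ring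
  have eB : (1 + y^2/2) * (∑ t ∈ range (M+2), bC m t * y^(2*t+1))
      = (∑ t ∈ range (M+2), bC m t * y^(2*t+1))
        + (1/2) * ∑ t ∈ range (M+2), bC m t * y^(2*t+3) := by
    rw [Finset.mul_sum, Finset.mul_sum, ← Finset.sum_add_distrib]
    apply Finset.sum_congr rfl; intro t _; ring
  rw [eA, eB, helper2 (bC (m+1)) M 1 y, helper2 (aC m) M 1 y,
      helper2 (bC m) M 1 y, helper3 (bC m) M 3 y,
      aC_eq_zero (show m < M+1 by omega),
      bC_eq_zero (m := m+1) (t := M+1) (show m+1 ≤ M+1 by omega),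
      bC_eq_zero (show m ≤ M+1 by omega), bC_eq_zero (show m ≤ M from hM),
      P2aC hm]
  rw [show ∑ s ∈ range M, bC (m+1) (s+1) * y^(2*s+(2+1))
      = ((∑ s ∈ range M, aC m (s+1) * y^(2*s+(2+1)))
        + (∑ s ∈ range M, bC m (s+1) * y^(2*s+(2+1))))
        + (1/2) * ∑ s ∈ range M, bC m s * y^(2*s+3) from by
    rw [Finset.mul_sum, ← Finset.sum_add_distrib, ← Finset.sum_add_distrib]
    apply Finset.sum_congr rfl; intro s _
    rw [P2bC m s hm]
    norm_num; ring]
  norm_num; ring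

lemma small_aC1 : aC 1 1 = 1/2 := by
  norm_num [aC, aQ, Nat.factorial]
lemma small_bC0 : bC 1 0 = 1 := by
  norm_num [bC, bQ, Nat.factorial]

lemma chebEO (m : ℕ) (hm : 1 ≤ m) : ∀ M, m ≤ M → ∀ x : ℂ,
    (Polynomial.Chebyshev.T ℂ (2*(m:ℤ))).eval (I*x)
      = (-1)^m * ∑ t ∈ range (M+2), aC m t * (2*x)^(2*t)
    ∧ (Polynomial.Chebyshev.U ℂ (2*(m:ℤ)-1)).eval (I*x) * I
      = (-1)^m * ∑ t ∈ range (M+2), bC m t * (2*x)^(2*t+1) := by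
  induction m, hm using Nat.le_induction with
  | base =>
      intro M hM x
      have hsub : range 2 ⊆ range (M+2) := by
        intro t ht; simp only [Finset.mem_range] at ht ⊢; omega
      have cA : ∑ t ∈ range (M+2), aC 1 t * (2*x)^(2*t)
          = ∑ t ∈ range 2, aC 1 t * (2*x)^(2*t) := by
        refine (Finset.sum_subset hsub ?_).symm
        intro t _ ht
        rw [aC_eq_zero (by simp only [Finset.mem_range] at ht; omega), zero_mul]
      have cB : ∑ t ∈ range (M+2), bC 1 t * (2*x)^(2*t+1)
          = ∑ t ∈ range 2, bC 1 t * (2*x)^(2*t+1) := by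
        refine (Finset.sum_subset hsub ?_).symm
        intro t _ ht
        rw [bC_eq_zero (by simp only [Finset.mem_range] at ht; omega), zero_mul]
      constructor
      · rw [cA, show (2*((1:ℕ):ℤ)) = 2 from by norm_num, Polynomial.Chebyshev.T_two]
        simp only [Finset.sum_range_succ, Finset.sum_range_zero, aC_zero le_rfl, small_aC1,
          eval_sub, eval_mul, eval_add, eval_pow, eval_one, eval_X, eval_ofNat]
        linear_combination (2*x^2) * Complex.I_sq
      · rw [cB, show (2*((1:ℕ):ℤ)-1) = 1 from by norm_num, Polynomial.Chebyshev.U_one]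
        simp only [Finset.sum_range_succ, Finset.sum_range_zero, small_bC0,
          bC_eq_zero (le_refl 1), eval_mul, eval_ofNat, eval_X]
        linear_combination (2*x) * Complex.I_sq
  | succ m hm ih =>
      intro M hM x
      obtain ⟨hT, hU⟩ := ih M (by omega) x
      constructor
      · rw [Tstep_eval m x _ _ hT hU, R1 m M hm (by omega) (2*x)]
      · rw [Ustep_eval m x _ _ hT hU, R2 m M hm (by omega) (2*x)]

lemma factC_ne (n : ℕ) : ((Nat.factorial n : ℕ) : ℂ) ≠ 0 :=
  Nat.cast_ne_zero.2 (Nat.factorial_ne_zero n)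

lemma fd_pow : ∀ n : ℕ, ∀ j ≤ n, ∀ x : ℂ,
    ∑ s ∈ range (n+1), (-1:ℂ)^s * (Nat.choose n s : ℂ) * (x + s)^j
      = if j = n then (-1)^n * (Nat.factorial n : ℂ) else 0 := by
  intro n
  induction n with
  | zero =>
      intro j hj x
      interval_cases j
      simp [Nat.factorial]
  | succ n ih =>
      intro j hj x
      have hB : ∀ y : ℂ, ∑ s ∈ range (n+2), (-1:ℂ)^s * (Nat.choose (n+1) s : ℂ) * (y + s)^j
          = (∑ s ∈ range (n+1), (-1:ℂ)^s * (Nat.choose n s : ℂ) * (y + s)^j)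
            - (∑ s ∈ range (n+1), (-1:ℂ)^s * (Nat.choose n s : ℂ) * ((y+1) + s)^j) := by
        intro y
        rw [Finset.sum_range_succ'
          (fun s => (-1:ℂ)^s * (Nat.choose (n+1) s : ℂ) * (y + s)^j) (n+1)]
        have key : ∀ s : ℕ,
            (-1:ℂ)^(s+1) * (Nat.choose (n+1) (s+1) : ℂ) * (y + ((s+1:ℕ):ℂ))^j
            = -((-1:ℂ)^s * (Nat.choose n s : ℂ) * ((y+1) + s)^j)
              + (-1:ℂ)^(s+1) * (Nat.choose n (s+1) : ℂ) * (y + ((s+1:ℕ):ℂ))^j := by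
          intro s
          rw [Nat.choose_succ_succ]
          push_cast
          rw [show (y + ((s:ℂ)+1)) = ((y+1) + s) from by ring]
          ring
        rw [Finset.sum_congr rfl (fun s _ => key s), Finset.sum_add_distrib]
        have shift : ∑ s ∈ range (n+1),
              (-1:ℂ)^(s+1) * (Nat.choose n (s+1) : ℂ) * (y + ((s+1:ℕ):ℂ))^j
            = (∑ s ∈ range (n+1), (-1:ℂ)^s * (Nat.choose n s : ℂ) * (y + s)^j)
              + (-1:ℂ)^(n+1) * (Nat.choose n (n+1) : ℂ) * (y + ((n+1:ℕ):ℂ))^j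
              - (-1:ℂ)^0 * (Nat.choose n 0 : ℂ) * (y + ((0:ℕ):ℂ))^j := by
          rw [← Finset.sum_range_succ
            (fun s => (-1:ℂ)^s * (Nat.choose n s : ℂ) * (y + s)^j) (n+1)]
          rw [Finset.sum_range_succ'
            (fun s => (-1:ℂ)^s * (Nat.choose n s : ℂ) * (y + s)^j) (n+1)]
          ring
        rw [shift]
        simp [Nat.choose_succ_self]
        ring
      rw [hB x]
      rcases Nat.lt_or_ge j (n+1) with hj2 | hj2
      · rw [ih j (by omega) x, ih j (by omega) (x+1)]
        simp [show j ≠ n + 1 by omega]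
      · obtain rfl : j = n+1 := by omega
        have expand : ∀ s : ℕ, (((x+1) + (s:ℂ)))^(n+1)
            = ∑ t ∈ range (n+2), (Nat.choose (n+1) t : ℂ) * (x + s)^t := by
          intro s
          rw [show ((x+1) + (s:ℂ)) = (x + s) + 1 from by ring, add_pow]
          apply Finset.sum_congr rfl; intro t _; rw [one_pow]; ring
        have swap : ∑ s ∈ range (n+1), (-1:ℂ)^s * (Nat.choose n s : ℂ) * ((x+1) + s)^(n+1)
            = ∑ t ∈ range (n+2), (Nat.choose (n+1) t : ℂ)
                * ∑ s ∈ range (n+1), (-1:ℂ)^s * (Nat.choose n s : ℂ) * (x + s)^t := by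
          rw [Finset.sum_congr rfl (fun s _ => by
            rw [expand s, Finset.mul_sum])]
          rw [Finset.sum_comm]
          apply Finset.sum_congr rfl; intro t _
          rw [Finset.mul_sum]
          apply Finset.sum_congr rfl; intro s _
          ring
        rw [swap]
        have inner : ∀ t ∈ range (n+2), (Nat.choose (n+1) t : ℂ)
              * (∑ s ∈ range (n+1), (-1:ℂ)^s * (Nat.choose n s : ℂ) * (x + s)^t)
            = (if t = n then (Nat.choose (n+1) n : ℂ) * ((-1)^n * (Nat.factorial n : ℂ))
              else 0)
              + (if t = n+1 then
                ∑ s ∈ range (n+1), (-1:ℂ)^s * (Nat.choose n s : ℂ) * (x + s)^(n+1)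
              else 0) := by
          intro t ht
          simp only [Finset.mem_range] at ht
          rcases Nat.lt_or_ge t (n+1) with h | h
          · rw [ih t (by omega) x]
            rcases eq_or_ne t n with rfl | hne
            · simp
            · simp [hne, show t ≠ n+1 by omega]
          · obtain rfl : t = n+1 := by omega
            simp [show ¬ (n+1 = n) from by omega]
        rw [Finset.sum_congr rfl inner, Finset.sum_add_distrib,
            Finset.sum_ite_eq' (range (n+2)) n, Finset.sum_ite_eq' (range (n+2)) (n+1)]
        simp only [Finset.mem_range, show n < n+2 from by omega, show n+1 < n+2 from by omega,
          if_true, if_pos, Nat.choose_succ_self_right]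
        push_cast [Nat.factorial_succ]
        ring

lemma fd_poly (n : ℕ) (p : Polynomial ℂ) (hp : p.natDegree ≤ n) (x : ℂ) :
    ∑ s ∈ range (n+1), (-1:ℂ)^s * (Nat.choose n s : ℂ) * p.eval (x + s)
      = (-1)^n * (Nat.factorial n : ℂ) * p.coeff n := by
  have hev : ∀ y : ℂ, p.eval y = ∑ j ∈ range (n+1), p.coeff j * y^j :=
    fun y => eval_eq_sum_range' (by omega) y
  calc ∑ s ∈ range (n+1), (-1:ℂ)^s * (Nat.choose n s : ℂ) * p.eval (x + s)
      = ∑ j ∈ range (n+1), p.coeff j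
          * ∑ s ∈ range (n+1), (-1:ℂ)^s * (Nat.choose n s : ℂ) * (x + s)^j := by
        rw [Finset.sum_congr rfl (fun s _ => by rw [hev (x + s), Finset.mul_sum])]
        rw [Finset.sum_comm]
        apply Finset.sum_congr rfl; intro j _
        rw [Finset.mul_sum]
        apply Finset.sum_congr rfl; intro s _
        ring
    _ = ∑ j ∈ range (n+1), p.coeff j
          * (if j = n then (-1:ℂ)^n * (Nat.factorial n : ℂ) else 0) := by
        apply Finset.sum_congr rfl; intro j hj
        simp only [Finset.mem_range] at hj
        rw [fd_pow n j (by omega) x]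
    _ = (-1)^n * (Nat.factorial n : ℂ) * p.coeff n := by
        rw [Finset.sum_congr rfl (fun j _ => by
          rw [mul_ite, mul_zero] : ∀ j ∈ range (n+1), _ = if j = n
            then p.coeff j * ((-1:ℂ)^n * (Nat.factorial n : ℂ)) else 0)]
        rw [Finset.sum_ite_eq' (range (n+1)) n]
        simp only [Finset.mem_range, show n < n+1 from by omega, if_true]
        ring

lemma Lprod : ∀ s m : ℕ, s < m →
    ((Nat.factorial (m+s) : ℕ) : ℂ)
      = ((Nat.factorial (m-s-1) : ℕ) : ℂ)
        * ((m:ℂ) * ∏ u ∈ Icc 1 s, ((m:ℂ)^2 - (u:ℂ)^2)) := by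
  intro s
  induction s with
  | zero =>
      intro m hm
      rw [show Finset.Icc 1 0 = ∅ from rfl, Finset.prod_empty, mul_one, Nat.add_zero,
          Nat.sub_zero, ← Nat.mul_factorial_pred (by omega : m ≠ 0)]
      push_cast; ring
  | succ s ih =>
      intro m hm
      have h1 : s < m := by omega
      have h2 : 1 ≤ m - s - 1 := by omega
      rw [show m+(s+1) = (m+s)+1 from by omega, Nat.factorial_succ]
      push_cast
      rw [ih m h1]
      rw [Finset.prod_Icc_succ_top (show 1 ≤ s+1 from by omega)]
      have e1 : ((Nat.factorial (m-s-1) : ℕ) : ℂ)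
          = ((m-s-1 : ℕ) : ℂ) * ((Nat.factorial (m-(s+1)-1) : ℕ) : ℂ) := by
        rw [show m-(s+1)-1 = (m-s-1)-1 from by omega, ← Nat.mul_factorial_pred (by omega : m-s-1 ≠ 0)]
        push_cast; ring
      rw [e1]
      have e2 : ((m-s-1 : ℕ) : ℂ) = (m:ℂ) - (s:ℂ) - 1 := by
        rw [show m-s-1 = m-(s+1) from by omega, Nat.cast_sub (show s+1 ≤ m from by omega)]
        push_cast; ring
      rw [e2]
      push_cast
      ring

lemma keyA (r m t : ℕ) (hm : 1 ≤ m) (ht : 1 ≤ t) (htr : t ≤ r) :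
    (m:ℂ)^(2*r) * aC m t / (m:ℂ)^(2*t)
      = (m:ℂ)^(2*(r-t)+2) * (∏ u ∈ Icc 1 (t-1), ((m:ℂ)^2 - (u:ℂ)^2))
        / ((Nat.factorial (2*t) : ℕ) : ℂ) := by
  have hm0 : (m:ℂ) ≠ 0 := Nat.cast_ne_zero.2 (by omega)
  rcases Nat.lt_or_ge m t with h | h
  · rw [aC_eq_zero h]
    rw [Finset.prod_eq_zero (Finset.mem_Icc.2 ⟨hm, by omega⟩ : m ∈ Icc 1 (t-1))
      (by ring : ((m:ℕ):ℂ)^2 - ((m:ℕ):ℂ)^2 = 0)]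
    simp
  · -- t ≤ m
    have hL := Lprod (t-1) m (by omega)
    rw [show m+(t-1) = m+t-1 from by omega, show m-(t-1)-1 = m-t from by omega] at hL
    simp only [aC, aQ]
    rw [if_pos h]
    push_cast
    rw [hL]
    have hpow : (m:ℂ)^(2*r) = (m:ℂ)^(2*(r-t)) * (m:ℂ)^(2*t) := by
      rw [← pow_add]; congr 1; omega
    rw [hpow]
    have hfne := factC_ne (m-t)
    have hfne2 := factC_ne (2*t)
    have hpne : (m:ℂ)^(2*t) ≠ 0 := pow_ne_zero _ hm0
    field_simp
    ring

lemma keyB (r m t : ℕ) (hm : 1 ≤ m) (htr : t < r) :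
    (m:ℂ)^(2*r) * bC m t / (m:ℂ)^(2*t+1)
      = (m:ℂ)^(2*(r-t)) * (∏ u ∈ Icc 1 t, ((m:ℂ)^2 - (u:ℂ)^2))
        / ((Nat.factorial (2*t+1) : ℕ) : ℂ) := by
  have hm0 : (m:ℂ) ≠ 0 := Nat.cast_ne_zero.2 (by omega)
  rcases Nat.lt_or_ge t m with h | h
  · have hL := Lprod t m h
    rw [show m-t-1 = m-t-1 from rfl] at hL
    simp only [bC, bQ]
    rw [if_pos h]
    push_cast
    rw [hL]
    have hpow : (m:ℂ)^(2*r) = (m:ℂ)^(2*(r-t)-1) * (m:ℂ)^(2*t+1) := by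
      rw [← pow_add]; congr 1; omega
    rw [hpow]
    have hpow2 : (m:ℂ)^(2*(r-t)) = (m:ℂ)^(2*(r-t)-1) * (m:ℂ) := by
      rw [← pow_succ]; congr 1; omega
    rw [hpow2]
    have hfne := factC_ne (m-t-1)
    have hfne2 := factC_ne (2*t+1)
    have hpne : (m:ℂ)^(2*t+1) ≠ 0 := pow_ne_zero _ hm0
    field_simp
  · rw [bC_eq_zero h]
    rw [Finset.prod_eq_zero (Finset.mem_Icc.2 ⟨hm, by omega⟩ : m ∈ Icc 1 t)
      (by ring : ((m:ℕ):ℂ)^2 - ((m:ℕ):ℂ)^2 = 0)]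
    simp

lemma core (r e d : ℕ) (he : 1 ≤ e) (hed : e + d = r) :
    ∑ m ∈ Icc 1 r, 2*(-1:ℂ)^(r+m) * ((m:ℂ)^(2*e) * ∏ u ∈ Icc 1 d, ((m:ℂ)^2 - (u:ℂ)^2))
      / (((Nat.factorial (r-m) : ℕ):ℂ) * ((Nat.factorial (r+m) : ℕ):ℂ)) = 1 := by
  have hr : 1 ≤ r := by omega
  set p : Polynomial ℂ := X^(2*e) * ∏ u ∈ Icc 1 d, (X^2 - C ((u:ℂ)^2)) with hp
  have hmon2 : (∏ u ∈ Icc 1 d, (X^2 - C ((u:ℂ)^2))).Monic :=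
    monic_prod_of_monic _ _ (fun u _ => monic_X_pow_sub_C _ two_ne_zero)
  have hmon : p.Monic := (monic_X_pow (2*e)).mul hmon2
  have hdeg : p.natDegree = 2*r := by
    rw [hp, Polynomial.Monic.natDegree_mul (monic_X_pow (2*e)) hmon2, natDegree_X_pow,
        Polynomial.natDegree_prod _ _ (fun u _ => (monic_X_pow_sub_C _ two_ne_zero).ne_zero)]
    rw [Finset.sum_congr rfl (fun u _ => natDegree_X_pow_sub_C)]
    rw [Finset.sum_const, Nat.card_Icc, smul_eq_mul]
    omega
  have hcoeff : p.coeff (2*r) = 1 := by rw [← hdeg]; exact hmon.coeff_natDegree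
  have heval : ∀ y : ℂ, p.eval y = y^(2*e) * ∏ u ∈ Icc 1 d, (y^2 - (u:ℂ)^2) := by
    intro y; rw [hp]; simp [eval_prod]
  have hfd := fd_poly (2*r) p (by omega) (-(r:ℂ))
  rw [hcoeff, mul_one, show (-1:ℂ)^(2*r) = 1 from by rw [pow_mul]; simp, one_mul] at hfd
  have hsplit : ∀ F : ℕ → ℂ, ∑ s ∈ range (2*r+1), F s
      = ((∑ s ∈ range r, F s) + F r) + ∑ s ∈ Ico (r+1) (2*r+1), F s := by
    intro F
    rw [Finset.range_eq_Ico,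
        ← Finset.sum_Ico_consecutive F (show (0:ℕ) ≤ r+1 from by omega)
          (show r+1 ≤ 2*r+1 from by omega),
        ← Finset.range_eq_Ico, Finset.sum_range_succ]
  rw [hsplit] at hfd
  have hmid : (-1:ℂ)^r * (Nat.choose (2*r) r : ℂ) * p.eval (-(r:ℂ) + (r:ℕ)) = 0 := by
    rw [show (-(r:ℂ) + ((r:ℕ):ℂ)) = 0 from by push_cast; ring, heval,
        zero_pow (show 2*e ≠ 0 from by omega)]
    ring
  rw [hmid, add_zero] at hfd
  have hlow : ∑ s ∈ range r, (-1:ℂ)^s * (Nat.choose (2*r) s : ℂ) * p.eval (-(r:ℂ) + s)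
      = ∑ m ∈ Icc 1 r, (-1:ℂ)^(r-m) * (Nat.choose (2*r) (r-m) : ℂ)
          * p.eval (-(r:ℂ) + ((r-m:ℕ):ℂ)) := by
    apply Finset.sum_nbij' (i := fun s => r - s) (j := fun m => r - m)
    · intro s hs; simp only [Finset.mem_range] at hs; simp only [Finset.mem_Icc]; omega
    · intro m hm; simp only [Finset.mem_Icc] at hm; simp only [Finset.mem_range]; omega
    · intro s hs; simp only [Finset.mem_range] at hs; omega
    · intro m hm; simp only [Finset.mem_Icc] at hm; omega
    · intro s hs; simp only [Finset.mem_range] at hs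
      rw [show r - (r - s) = s from by omega]
  have hhigh : ∑ s ∈ Ico (r+1) (2*r+1), (-1:ℂ)^s * (Nat.choose (2*r) s : ℂ)
        * p.eval (-(r:ℂ) + s)
      = ∑ m ∈ Icc 1 r, (-1:ℂ)^(r+m) * (Nat.choose (2*r) (r+m) : ℂ)
          * p.eval (-(r:ℂ) + ((r+m:ℕ):ℂ)) := by
    apply Finset.sum_nbij' (i := fun s => s - r) (j := fun m => r + m)
    · intro s hs; simp only [Finset.mem_Ico] at hs; simp only [Finset.mem_Icc]; omega
    · intro m hm; simp only [Finset.mem_Icc] at hm; simp only [Finset.mem_Ico]; omega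
    · intro s hs; simp only [Finset.mem_Ico] at hs; omega
    · intro m hm; simp only [Finset.mem_Icc] at hm; omega
    · intro s hs; simp only [Finset.mem_Ico] at hs
      rw [show r + (s - r) = s from by omega]
  rw [hlow, hhigh, ← Finset.sum_add_distrib] at hfd
  have key : ∀ m ∈ Icc 1 r,
      (-1:ℂ)^(r-m) * (Nat.choose (2*r) (r-m) : ℂ) * p.eval (-(r:ℂ) + ((r-m:ℕ):ℂ))
        + (-1:ℂ)^(r+m) * (Nat.choose (2*r) (r+m) : ℂ) * p.eval (-(r:ℂ) + ((r+m:ℕ):ℂ))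
      = ((Nat.factorial (2*r) : ℕ):ℂ)
          * (2*(-1:ℂ)^(r+m) * ((m:ℂ)^(2*e) * ∏ u ∈ Icc 1 d, ((m:ℂ)^2 - (u:ℂ)^2))
            / (((Nat.factorial (r-m) : ℕ):ℂ) * ((Nat.factorial (r+m) : ℕ):ℂ))) := by
    intro m hm'
    obtain ⟨hm1, hm2⟩ := Finset.mem_Icc.1 hm'
    have e1 : -(r:ℂ) + ((r-m:ℕ):ℂ) = -(m:ℂ) := by
      rw [Nat.cast_sub hm2]; ring
    have e2 : -(r:ℂ) + ((r+m:ℕ):ℂ) = (m:ℂ) := by push_cast; ring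
    have pev : p.eval (-(m:ℂ)) = (m:ℂ)^(2*e) * ∏ u ∈ Icc 1 d, ((m:ℂ)^2 - (u:ℂ)^2) := by
      rw [heval, Even.neg_pow (even_two_mul e)]
      congr 1
      apply Finset.prod_congr rfl; intro u _; rw [neg_sq]
    have sgn : (-1:ℂ)^(r-m) = (-1:ℂ)^(r+m) := by
      rw [show r+m = (r-m)+2*m from by omega, pow_add, pow_mul]; simp
    have ch1 : ((Nat.choose (2*r) (r-m) : ℕ):ℂ)
        = ((Nat.factorial (2*r) : ℕ):ℂ)
          / (((Nat.factorial (r-m) : ℕ):ℂ) * ((Nat.factorial (r+m) : ℕ):ℂ)) := by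
      rw [Nat.cast_choose ℂ (show r-m ≤ 2*r from by omega),
          show 2*r-(r-m) = r+m from by omega]
    have ch2 : ((Nat.choose (2*r) (r+m) : ℕ):ℂ)
        = ((Nat.factorial (2*r) : ℕ):ℂ)
          / (((Nat.factorial (r+m) : ℕ):ℂ) * ((Nat.factorial (r-m) : ℕ):ℂ)) := by
      rw [Nat.cast_choose ℂ (show r+m ≤ 2*r from by omega),
          show 2*r-(r+m) = r-m from by omega]
    rw [e1, e2, pev, heval, sgn, ch1, ch2]
    have f1 := factC_ne (r-m)
    have f2 := factC_ne (r+m)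
    field_simp
    ring
  rw [Finset.sum_congr rfl key, ← Finset.mul_sum] at hfd
  have hfne := factC_ne (2*r)
  calc ∑ m ∈ Icc 1 r, 2*(-1:ℂ)^(r+m) * ((m:ℂ)^(2*e) * ∏ u ∈ Icc 1 d, ((m:ℂ)^2 - (u:ℂ)^2))
      / (((Nat.factorial (r-m) : ℕ):ℂ) * ((Nat.factorial (r+m) : ℕ):ℂ))
      = (((Nat.factorial (2*r) : ℕ):ℂ))⁻¹ * (((Nat.factorial (2*r) : ℕ):ℂ)
          * ∑ m ∈ Icc 1 r, 2*(-1:ℂ)^(r+m) * ((m:ℂ)^(2*e)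
            * ∏ u ∈ Icc 1 d, ((m:ℂ)^2 - (u:ℂ)^2))
          / (((Nat.factorial (r-m) : ℕ):ℂ) * ((Nat.factorial (r+m) : ℕ):ℂ))) := by
        rw [← mul_assoc, inv_mul_cancel₀ hfne, one_mul]
    _ = 1 := by rw [hfd, inv_mul_cancel₀ hfne]

lemma sum_pair (n : ℕ) (f : ℕ → ℂ) :
    ∑ k ∈ range (2*n), f k = ∑ t ∈ range n, (f (2*t) + f (2*t+1)) := by
  induction n with
  | zero => simp
  | succ n ih =>
      rw [show 2*(n+1) = (2*n+1)+1 from by ring, Finset.sum_range_succ,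
          Finset.sum_range_succ, Finset.sum_range_succ, ih]
      ring


/-- **Section 4.2, second identity.** For every `r ≥ 1` and `z ∈ ℂ`,
`∑_{m=1}^{r} (2(−1)^r m^{2r}/((r−m)!(r+m)!)) (T_{2m}(iz/(2m)) + i·U_{2m−1}(iz/(2m)))
 = ∑_{m=0}^{2r} z^m/m!`,
where `T_ℓ`, `U_ℓ` are the Chebyshev polynomials of the first and second kind:
the stability polynomial of the order-`2r` explicit midpoint extrapolation method is
the degree-`2r` Taylor polynomial of the exponential. -/
theorem midpoint_extrapolation_stability_identity (r : ℕ) (hr : 1 ≤ r) (z : ℂ) :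
    ∑ m ∈ Finset.Icc 1 r,
        (2 * (-1 : ℂ) ^ r * (m : ℂ) ^ (2 * r) /
          ((Nat.factorial (r - m) : ℂ) * (Nat.factorial (r + m) : ℂ))) *
          ((Polynomial.Chebyshev.T ℂ (2 * (m : ℤ))).eval (Complex.I * z / (2 * m)) +
            Complex.I *
              (Polynomial.Chebyshev.U ℂ (2 * (m : ℤ) - 1)).eval (Complex.I * z / (2 * m))) =
      ∑ m ∈ Finset.range (2 * r + 1), z ^ m / (Nat.factorial m : ℂ) := by
  have hbracket : ∀ m ∈ Icc 1 r,
      (2 * (-1 : ℂ) ^ r * (m : ℂ) ^ (2 * r) /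
          ((Nat.factorial (r - m) : ℂ) * (Nat.factorial (r + m) : ℂ))) *
          ((Polynomial.Chebyshev.T ℂ (2 * (m : ℤ))).eval (Complex.I * z / (2 * m)) +
            Complex.I *
              (Polynomial.Chebyshev.U ℂ (2 * (m : ℤ) - 1)).eval (Complex.I * z / (2 * m)))
      = ∑ k ∈ range (2*r+1),
          (2 * (-1:ℂ)^(r+m) * (m:ℂ)^(2*r) /
            ((Nat.factorial (r-m) : ℂ) * (Nat.factorial (r+m) : ℂ)))
            * ((if Even k then aC m (k/2) else bC m (k/2)) / (m:ℂ)^k) * z^k := by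
    intro m hm'
    obtain ⟨hm1, hm2⟩ := Finset.mem_Icc.1 hm'
    have hmne : (m:ℂ) ≠ 0 := Nat.cast_ne_zero.2 (by omega)
    have harg : Complex.I * z / (2*(m:ℂ)) = Complex.I * (z/(2*(m:ℂ))) := by
      rw [mul_div_assoc]
    obtain ⟨hT, hU⟩ := chebEO m hm1 r hm2 (z/(2*(m:ℂ)))
    have hUc : Complex.I * (Polynomial.Chebyshev.U ℂ (2*(m:ℤ)-1)).eval
        (Complex.I * (z/(2*(m:ℂ))))
        = (-1:ℂ)^m * ∑ t ∈ range (r+2), bC m t * (2*(z/(2*(m:ℂ))))^(2*t+1) := by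
      rw [mul_comm, hU]
    have h2x : 2*(z/(2*(m:ℂ))) = z/(m:ℂ) := by field_simp
    rw [harg, hT, hUc, h2x]
    have hsum : ∑ t ∈ range (r+2), (aC m t * (z/(m:ℂ))^(2*t) + bC m t * (z/(m:ℂ))^(2*t+1))
        = ∑ k ∈ range (2*r+1),
            (if Even k then aC m (k/2) else bC m (k/2)) * (z/(m:ℂ))^k := by
      have hp := sum_pair (r+2)
        (fun k => (if Even k then aC m (k/2) else bC m (k/2)) * (z/(m:ℂ))^k)
      have hpair : ∀ t : ℕ,
          ((if Even (2*t) then aC m ((2*t)/2) else bC m ((2*t)/2)) * (z/(m:ℂ))^(2*t))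
          + ((if Even (2*t+1) then aC m ((2*t+1)/2) else bC m ((2*t+1)/2))
              * (z/(m:ℂ))^(2*t+1))
          = aC m t * (z/(m:ℂ))^(2*t) + bC m t * (z/(m:ℂ))^(2*t+1) := by
        intro t
        rw [if_pos (even_two_mul t),
            if_neg (by simp [Nat.even_add_one, even_two_mul] : ¬ Even (2*t+1)),
            show (2*t)/2 = t from by omega, show (2*t+1)/2 = t from by omega]
      rw [Finset.sum_congr rfl (fun t _ => hpair t)] at hp
      rw [← hp]
      rw [show 2*(r+2) = ((2*r+1)+1+1)+1 from by ring, Finset.sum_range_succ,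
          Finset.sum_range_succ, Finset.sum_range_succ]
      rw [if_neg (show ¬ Even ((2*r+1)+1+1) from by
            rw [show (2*r+1)+1+1 = 2*(r+1)+1 from by ring]
            simp [Nat.even_add_one, even_two_mul]),
          if_pos (show Even ((2*r+1)+1) from by
            rw [show (2*r+1)+1 = 2*(r+1) from by ring]; exact even_two_mul _),
          if_neg (show ¬ Even (2*r+1) from by simp [Nat.even_add_one, even_two_mul]),
          show ((2*r+1)+1+1)/2 = r+1 from by omega,
          show ((2*r+1)+1)/2 = r+1 from by omega,
          show (2*r+1)/2 = r from by omega,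
          bC_eq_zero (show m ≤ r+1 from by omega),
          aC_eq_zero (show m < r+1 from by omega),
          bC_eq_zero (show m ≤ r from hm2)]
      ring
    calc (2 * (-1 : ℂ) ^ r * (m : ℂ) ^ (2 * r) /
          ((Nat.factorial (r - m) : ℂ) * (Nat.factorial (r + m) : ℂ))) *
          ((-1:ℂ)^m * (∑ t ∈ range (r+2), aC m t * (z/(m:ℂ))^(2*t))
            + (-1:ℂ)^m * ∑ t ∈ range (r+2), bC m t * (z/(m:ℂ))^(2*t+1))
        = ((-1:ℂ)^m * (2 * (-1 : ℂ) ^ r * (m : ℂ) ^ (2 * r) /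
            ((Nat.factorial (r - m) : ℂ) * (Nat.factorial (r + m) : ℂ))))
            * ∑ t ∈ range (r+2), (aC m t * (z/(m:ℂ))^(2*t)
              + bC m t * (z/(m:ℂ))^(2*t+1)) := by
          rw [Finset.sum_add_distrib]; ring
      _ = ((-1:ℂ)^m * (2 * (-1 : ℂ) ^ r * (m : ℂ) ^ (2 * r) /
            ((Nat.factorial (r - m) : ℂ) * (Nat.factorial (r + m) : ℂ))))
            * ∑ k ∈ range (2*r+1),
              (if Even k then aC m (k/2) else bC m (k/2)) * (z/(m:ℂ))^k := by rw [hsum]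
      _ = ∑ k ∈ range (2*r+1),
          (2 * (-1:ℂ)^(r+m) * (m:ℂ)^(2*r) /
            ((Nat.factorial (r-m) : ℂ) * (Nat.factorial (r+m) : ℂ)))
            * ((if Even k then aC m (k/2) else bC m (k/2)) / (m:ℂ)^k) * z^k := by
          rw [Finset.mul_sum]
          apply Finset.sum_congr rfl; intro k _
          rw [div_pow, pow_add]
          have : ((m:ℂ)^k) ≠ 0 := pow_ne_zero _ hmne
          field_simp
  rw [Finset.sum_congr rfl hbracket, Finset.sum_comm]
  apply Finset.sum_congr rfl
  intro k hk
  simp only [Finset.mem_range] at hk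
  have hsuff : ∑ m ∈ Icc 1 r,
      (2 * (-1:ℂ)^(r+m) * (m:ℂ)^(2*r) /
        ((Nat.factorial (r-m) : ℂ) * (Nat.factorial (r+m) : ℂ)))
        * ((if Even k then aC m (k/2) else bC m (k/2)) / (m:ℂ)^k)
      = 1 / ((Nat.factorial k : ℕ):ℂ) := by
    rcases Nat.even_or_odd k with hke | hko
    · obtain ⟨t, ht'⟩ := hke
      obtain rfl : k = 2*t := by omega
      rcases Nat.eq_zero_or_pos t with rfl | ht
      · have hcg : ∀ m ∈ Icc 1 r,
            (2 * (-1:ℂ)^(r+m) * (m:ℂ)^(2*r) /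
              ((Nat.factorial (r-m) : ℂ) * (Nat.factorial (r+m) : ℂ)))
              * ((if Even (2*0) then aC m ((2*0)/2) else bC m ((2*0)/2)) / (m:ℂ)^(2*0))
            = 2*(-1:ℂ)^(r+m) * ((m:ℂ)^(2*r) * ∏ u ∈ Finset.Icc (1:ℕ) 0, ((m:ℂ)^2 - (u:ℂ)^2))
              / (((Nat.factorial (r-m) : ℕ):ℂ) * ((Nat.factorial (r+m) : ℕ):ℂ)) := by
          intro m hm'
          obtain ⟨hm1, _⟩ := Finset.mem_Icc.1 hm'
          rw [if_pos (by norm_num : Even (2*0)), show (2*0)/2 = 0 from rfl,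
              aC_zero hm1, show Finset.Icc (1:ℕ) 0 = ∅ from rfl, Finset.prod_empty]
          norm_num
        rw [Finset.sum_congr rfl hcg, core r r 0 hr (by omega)]
        norm_num [Nat.factorial]
      · have hcg : ∀ m ∈ Icc 1 r,
            (2 * (-1:ℂ)^(r+m) * (m:ℂ)^(2*r) /
              ((Nat.factorial (r-m) : ℂ) * (Nat.factorial (r+m) : ℂ)))
              * ((if Even (2*t) then aC m ((2*t)/2) else bC m ((2*t)/2)) / (m:ℂ)^(2*t))
            = (2*(-1:ℂ)^(r+m) * ((m:ℂ)^(2*(r-t+1)) * ∏ u ∈ Icc 1 (t-1),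
                ((m:ℂ)^2 - (u:ℂ)^2))
              / (((Nat.factorial (r-m) : ℕ):ℂ) * ((Nat.factorial (r+m) : ℕ):ℂ)))
              * (((Nat.factorial (2*t) : ℕ):ℂ))⁻¹ := by
          intro m hm'
          obtain ⟨hm1, _⟩ := Finset.mem_Icc.1 hm'
          have hk2 := keyA r m t hm1 ht (by omega)
          rw [show 2*(r-t)+2 = 2*(r-t+1) from by omega] at hk2
          rw [if_pos (even_two_mul t), show (2*t)/2 = t from by omega]
          calc (2 * (-1:ℂ)^(r+m) * (m:ℂ)^(2*r) /
              ((Nat.factorial (r-m) : ℂ) * (Nat.factorial (r+m) : ℂ)))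
              * (aC m t / (m:ℂ)^(2*t))
              = (2 * (-1:ℂ)^(r+m) /
                ((Nat.factorial (r-m) : ℂ) * (Nat.factorial (r+m) : ℂ)))
                * ((m:ℂ)^(2*r) * aC m t / (m:ℂ)^(2*t)) := by ring
            _ = _ := by rw [hk2]; ring
        rw [Finset.sum_congr rfl hcg, ← Finset.sum_mul,
            core r (r-t+1) (t-1) (by omega) (by omega)]
        rw [show 2*t = 2*t from rfl]
        norm_num
    · obtain ⟨t, rfl⟩ := hko
      have htr : t < r := by omega
      have hcg : ∀ m ∈ Icc 1 r,
          (2 * (-1:ℂ)^(r+m) * (m:ℂ)^(2*r) /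
            ((Nat.factorial (r-m) : ℂ) * (Nat.factorial (r+m) : ℂ)))
            * ((if Even (2*t+1) then aC m ((2*t+1)/2) else bC m ((2*t+1)/2)) / (m:ℂ)^(2*t+1))
          = (2*(-1:ℂ)^(r+m) * ((m:ℂ)^(2*(r-t)) * ∏ u ∈ Icc 1 t, ((m:ℂ)^2 - (u:ℂ)^2))
            / (((Nat.factorial (r-m) : ℕ):ℂ) * ((Nat.factorial (r+m) : ℕ):ℂ)))
            * (((Nat.factorial (2*t+1) : ℕ):ℂ))⁻¹ := by
        intro m hm'
        obtain ⟨hm1, _⟩ := Finset.mem_Icc.1 hm'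
        have hk2 := keyB r m t hm1 htr
        rw [if_neg (show ¬ Even (2*t+1) from by simp [Nat.even_add_one, even_two_mul]),
            show (2*t+1)/2 = t from by omega]
        calc (2 * (-1:ℂ)^(r+m) * (m:ℂ)^(2*r) /
            ((Nat.factorial (r-m) : ℂ) * (Nat.factorial (r+m) : ℂ)))
            * (bC m t / (m:ℂ)^(2*t+1))
            = (2 * (-1:ℂ)^(r+m) /
              ((Nat.factorial (r-m) : ℂ) * (Nat.factorial (r+m) : ℂ)))
              * ((m:ℂ)^(2*r) * bC m t / (m:ℂ)^(2*t+1)) := by ring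
          _ = _ := by rw [hk2]; ring
      rw [Finset.sum_congr rfl hcg, ← Finset.sum_mul,
          core r (r-t) t (by omega) (by omega)]
      norm_num
  rw [← Finset.sum_mul, hsuff]
  ring
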